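/- Let n ≥ 1 and work in E = EuclideanSpace ℝ (Fin n). Let f, h : E → ℝ be differentiable, let σ, R_f, α > 0 with α·R_f ≤ 1. Assume h is σ-strongly convex (x ↦ h(x) − (σ/2)‖x‖² is convex) and f is R_f-relatively smooth with respect to h in the inequality sense: f(x) − f(y) − ⟪∇f(y), x − y⟫ ≤ R_f · D_h(x, y) for all x, y, where D_h(x, y) = h(x) − h(y) − ⟪∇h(y), x − y⟫. Let g : E → EReal be proper, lower semicontinuous and convex, and set E(x) = (f(x) : EReal) + g(x). Fix y ∈ E and suppose z ∈ E satisfies g(z) finite and, for all x ∈ E, g(z) + ⟪∇f(y), z − y⟫ + (1/α)·D_h(z, y) ≤ g(x) + ⟪∇f(y), x − y⟫ + (1/α)·D_h(x, y) (as an inequality in EReal). Then E(z) + ((1/α − R_f)·(σ/2)·‖z − y‖² : EReal) ≤ E(y). -/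

import Mathlib

open RealInnerProductSpace

/-- The Bregman distance `D_h(x, y) = h(x) − h(y) − ⟪∇h(y), x − y⟫`. -/
noncomputable def bregman {n : ℕ} (h : EuclideanSpace ℝ (Fin n) → ℝ)
    (x y : EuclideanSpace ℝ (Fin n)) : ℝ :=
  h x - h y - ⟪gradient h y, x - y⟫


open Filter Set Topology

lemma directional_le_of_convexOn {n : ℕ} (φ : EuclideanSpace ℝ (Fin n) → ℝ)
    (hφc : ConvexOn ℝ Set.univ φ) (y z : EuclideanSpace ℝ (Fin n))
    {d : ℝ} (hd : HasDerivAt (fun t : ℝ => φ (y + t • (z - y))) d 0) :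
    d ≤ φ z - φ y := by
  set ψ : ℝ → ℝ := fun t => φ (y + t • (z - y)) with hψ
  have hψ0 : ψ 0 = φ y := by simp [hψ]
  have hslope : Tendsto (slope ψ 0) (𝓝[>] (0:ℝ)) (𝓝 d) :=
    (hasDerivAt_iff_tendsto_slope.mp hd).mono_left
      (nhdsWithin_mono _ (fun t ht => ne_of_gt ht))
  refine le_of_tendsto hslope ?_
  filter_upwards [Ioo_mem_nhdsGT_of_mem (Set.mem_Ico.mpr ⟨le_refl (0:ℝ), zero_lt_one⟩)]
    with t ht
  obtain ⟨ht0, ht1⟩ := ht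
  have hconv := hφc.2 (Set.mem_univ y) (Set.mem_univ z) (by linarith : (0:ℝ) ≤ 1 - t)
    ht0.le (by ring)
  have hpt : (1 - t) • y + t • z = y + t • (z - y) := by
    rw [smul_sub, sub_smul, one_smul]; abel
  rw [hpt] at hconv
  have hψt : ψ t ≤ (1 - t) * φ y + t * φ z := by simpa [hψ] using hconv
  have hs : slope ψ 0 t = (ψ t - φ y) / t := by
    rw [slope_def_field]; rw [hψ0]; ring_nf
  rw [hs, div_le_iff₀ ht0]
  nlinarith

lemma hasDerivAt_comp_line {n : ℕ} (k : EuclideanSpace ℝ (Fin n) → ℝ)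
    (y v : EuclideanSpace ℝ (Fin n)) (hk : DifferentiableAt ℝ k y) :
    HasDerivAt (fun t : ℝ => k (y + t • v)) ⟪gradient k y, v⟫ 0 := by
  have hL : HasDerivAt (fun t : ℝ => y + t • v) v 0 := by
    simpa using ((hasDerivAt_id (0:ℝ)).smul_const v).const_add y
  have hF : HasFDerivAt k (InnerProductSpace.toDual ℝ _ (gradient k y)) y :=
    hasGradientAt_iff_hasFDerivAt.mp hk.hasGradientAt
  have hg0 : y + (0:ℝ) • v = y := by simp
  rw [← hg0] at hF
  have := hF.comp_hasDerivAt 0 hL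
  convert this using 1
  · rfl
  · rfl
  · rfl
  simp [InnerProductSpace.toDual_apply_apply]

lemma hasDerivAt_normsq_line {n : ℕ} (y v : EuclideanSpace ℝ (Fin n)) :
    HasDerivAt (fun t : ℝ => ‖y + t • v‖ ^ 2) (2 * ⟪y, v⟫) 0 := by
  have heq : (fun t : ℝ => ‖y + t • v‖ ^ 2)
      = fun t : ℝ => ‖y‖ ^ 2 + 2 * (t * ⟪y, v⟫) + t ^ 2 * ‖v‖ ^ 2 := by
    funext t
    rw [norm_add_sq_real, real_inner_smul_right, norm_smul]
    simp only [Real.norm_eq_abs, mul_pow, sq_abs]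
  rw [heq]
  have h1 : HasDerivAt (fun t : ℝ => t * ⟪y, v⟫) ⟪y, v⟫ 0 := hasDerivAt_mul_const _
  have h2 : HasDerivAt (fun t : ℝ => t ^ 2) (0 : ℝ) 0 := by
    simpa using hasDerivAt_pow 2 (0 : ℝ)
  have := ((h1.const_mul 2).const_add (‖y‖ ^ 2)).add (h2.mul_const (‖v‖ ^ 2))
  convert this using 1
  · rfl
  · rfl
  · rfl
  ring

lemma bregman_ge_strong {n : ℕ} (h : EuclideanSpace ℝ (Fin n) → ℝ)
    (hh : Differentiable ℝ h) (σ : ℝ)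
    (hstrong : ConvexOn ℝ Set.univ (fun x => h x - σ / 2 * ‖x‖ ^ 2))
    (y z : EuclideanSpace ℝ (Fin n)) :
    σ / 2 * ‖z - y‖ ^ 2 ≤ bregman h z y := by
  have hd : HasDerivAt (fun t : ℝ => h (y + t • (z - y)) - σ / 2 * ‖y + t • (z - y)‖ ^ 2)
      (⟪gradient h y, z - y⟫ - σ / 2 * (2 * ⟪y, z - y⟫)) 0 :=
    (hasDerivAt_comp_line h y (z - y) (hh y)).sub
      ((hasDerivAt_normsq_line y (z - y)).const_mul (σ / 2))
  have key := directional_le_of_convexOn _ hstrong y z hd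
  have hexp : ‖z - y‖ ^ 2 = ‖z‖ ^ 2 - 2 * ⟪z, y⟫ + ‖y‖ ^ 2 := norm_sub_sq_real z y
  have hcomm : ⟪y, z - y⟫ = ⟪z, y⟫ - ‖y‖ ^ 2 := by
    rw [inner_sub_right, real_inner_comm y z, real_inner_self_eq_norm_sq]
  rw [bregman, hexp]
  rw [hcomm] at key
  nlinarith [key]

/-- Sufficient decrease of the Bregman proximal step:
`E(z) + (1/α − R_f)·(σ/2)·‖z − y‖² ≤ E(y)`. -/
theorem bregman_prox_sufficient_decrease
    (n : ℕ) (hn : 1 ≤ n)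
    (f h : EuclideanSpace ℝ (Fin n) → ℝ)
    (hf : Differentiable ℝ f) (hh : Differentiable ℝ h)
    (σ Rf α : ℝ) (hσ : 0 < σ) (hRf : 0 < Rf) (hα : 0 < α) (hαRf : α * Rf ≤ 1)
    (hstrong : ConvexOn ℝ Set.univ (fun x => h x - σ / 2 * ‖x‖ ^ 2))
    (hrel : ∀ x y : EuclideanSpace ℝ (Fin n),
      f x - f y - ⟪gradient f y, x - y⟫ ≤ Rf * bregman h x y)
    (g : EuclideanSpace ℝ (Fin n) → EReal)
    (hg_bot : ∀ x, g x ≠ ⊥) (hg_proper : ∃ x, g x ≠ ⊤)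
    (hg_lsc : LowerSemicontinuous g)
    (hg_convex : ∀ x y : EuclideanSpace ℝ (Fin n), ∀ t : ℝ, 0 ≤ t → t ≤ 1 →
      g (t • x + (1 - t) • y) ≤ (t : EReal) * g x + ((1 - t : ℝ) : EReal) * g y)
    (En : EuclideanSpace ℝ (Fin n) → EReal)
    (hEn : ∀ x, En x = (f x : EReal) + g x)
    (y z : EuclideanSpace ℝ (Fin n)) (hz : g z ≠ ⊤)
    (hmin : ∀ x : EuclideanSpace ℝ (Fin n),
      g z + ((⟪gradient f y, z - y⟫ + (1 / α) * bregman h z y : ℝ) : EReal) ≤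
        g x + ((⟪gradient f y, x - y⟫ + (1 / α) * bregman h x y : ℝ) : EReal)) :
    En z + (((1 / α - Rf) * (σ / 2) * ‖z - y‖ ^ 2 : ℝ) : EReal) ≤ En y := by

  -- notation
  have hDge : σ / 2 * ‖z - y‖ ^ 2 ≤ bregman h z y := bregman_ge_strong h hh σ hstrong y z
  have hRle : Rf ≤ 1 / α := by
    rw [le_div_iff₀ hα]; linarith [hαRf, mul_comm α Rf]
  -- hmin at y simplifies
  have h0 : (⟪gradient f y, y - y⟫ + (1 / α) * bregman h y y : ℝ) = 0 := by
    simp [bregman, sub_self, inner_zero_right]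
  have hminy := hmin y
  rw [h0] at hminy
  simp only [EReal.coe_zero, add_zero] at hminy
  -- g z is real
  set a : ℝ := (g z).toReal with ha
  have hgz : g z = (a : EReal) := (EReal.coe_toReal hz (hg_bot z)).symm
  set c : ℝ := ⟪gradient f y, z - y⟫ + (1 / α) * bregman h z y with hc
  have hminy' : ((a + c : ℝ) : EReal) ≤ g y := by
    rw [hgz] at hminy
    rw [EReal.coe_add]
    exact hminy
  -- real inequality
  have hreal : f z + a + (1 / α - Rf) * (σ / 2) * ‖z - y‖ ^ 2 ≤ f y + (a + c) := by
    have h1 := hrel z y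
    have h2 : (1 / α - Rf) * (σ / 2 * ‖z - y‖ ^ 2) ≤ (1 / α - Rf) * bregman h z y :=
      mul_le_mul_of_nonneg_left hDge (by linarith)
    rw [hc]
    nlinarith
  rw [hEn z, hEn y, hgz]
  calc (f z : EReal) + (a : EReal) + (((1 / α - Rf) * (σ / 2) * ‖z - y‖ ^ 2 : ℝ) : EReal)
      = ((f z + a + (1 / α - Rf) * (σ / 2) * ‖z - y‖ ^ 2 : ℝ) : EReal) := by
        rw [EReal.coe_add, EReal.coe_add]
    _ ≤ ((f y + (a + c) : ℝ) : EReal) := by exact_mod_cast hreal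
    _ = (f y : EReal) + ((a + c : ℝ) : EReal) := by rw [EReal.coe_add]
    _ ≤ (f y : EReal) + g y := add_le_add_right hminy' _
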